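/- In a 3-connected graph G, if U is a set of vertices and some vertex u ∈ U has at least 3 neighbors in U, then G contains a K_4 minor each of whose branch sets meets U. -/

import Mathlib

open SimpleGraph

/-- `B` is a system of branch sets witnessing a `K_n` minor in `G`:
nonempty, connected, pairwise disjoint sets with an edge between any two of them. -/
def IsCompleteMinorWitness {V : Type*} (G : SimpleGraph V) (n : ℕ)
    (B : Fin n → Set V) : Prop :=
  (∀ i, (B i).Nonempty) ∧ (∀ i, (G.induce (B i)).Connected) ∧
  (∀ i j, i ≠ j → Disjoint (B i) (B j)) ∧
  (∀ i j, i ≠ j → ∃ u ∈ B i, ∃ v ∈ B j, G.Adj u v)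

/-- `G` contains a complete minor `K_n`. -/
def HasCompleteMinor {V : Type*} (G : SimpleGraph V) (n : ℕ) : Prop :=
  ∃ B : Fin n → Set V, IsCompleteMinorWitness G n B

/-- `A`, `B` are systems of branch sets witnessing a complete bipartite `K_{m,n}`
minor in `G`. -/
def IsBipartiteMinorWitness {V : Type*} (G : SimpleGraph V) (m n : ℕ)
    (A : Fin m → Set V) (B : Fin n → Set V) : Prop :=
  (∀ i, (A i).Nonempty) ∧ (∀ j, (B j).Nonempty) ∧
  (∀ i, (G.induce (A i)).Connected) ∧ (∀ j, (G.induce (B j)).Connected) ∧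
  (∀ i j, i ≠ j → Disjoint (A i) (A j)) ∧
  (∀ i j, i ≠ j → Disjoint (B i) (B j)) ∧
  (∀ i j, Disjoint (A i) (B j)) ∧
  (∀ i j, ∃ u ∈ A i, ∃ v ∈ B j, G.Adj u v)

/-- `G` contains a complete bipartite minor `K_{m,n}`. -/
def HasBipartiteMinor {V : Type*} (G : SimpleGraph V) (m n : ℕ) : Prop :=
  ∃ (A : Fin m → Set V) (B : Fin n → Set V), IsBipartiteMinorWitness G m n A B

/-- Wagner characterization: a graph is planar iff it has no `K_5` and no `K_{3,3}` minor. -/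
def IsPlanar {V : Type*} (G : SimpleGraph V) : Prop :=
  ¬ HasCompleteMinor G 5 ∧ ¬ HasBipartiteMinor G 3 3

/-- Minor characterization of outerplanarity: no `K_4` and no `K_{2,3}` minor. -/
def IsOuterplanar {V : Type*} (G : SimpleGraph V) : Prop :=
  ¬ HasCompleteMinor G 4 ∧ ¬ HasBipartiteMinor G 2 3


/-- `G` remains connected after deleting any set of at most 2 vertices. -/
def ThreeConnected {V : Type*} (G : SimpleGraph V) : Prop :=
  ∀ S : Set V, S.ncard ≤ 2 → (G.induce Sᶜ).Connected

section AuxK4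

open SimpleGraph Walk

variable {V : Type*} {G : SimpleGraph V}

lemma k4aux_induce_adj_of_adj {S : Set V} {x y : V} (hx : x ∈ S) (hy : y ∈ S) (h : G.Adj x y) :
    (G.induce S).Adj ⟨x, hx⟩ ⟨y, hy⟩ := by
  simpa using h

lemma k4aux_reach_induce_of_walk {S : Set V} :
    ∀ {x y : V} (p : G.Walk x y), (∀ v ∈ p.support, v ∈ S) → ∀ (hx : x ∈ S) (hy : y ∈ S),
      (G.induce S).Reachable ⟨x, hx⟩ ⟨y, hy⟩
  | _, _, Walk.nil, _, _, _ => Reachable.refl _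
  | _, _, Walk.cons h q, hp, hx, hy =>
      ((k4aux_induce_adj_of_adj hx (hp _ (by simp)) h).reachable).trans
        (k4aux_reach_induce_of_walk q (fun v hv => hp v (by simp [hv])) _ hy)

lemma k4aux_hub_connected {S : Set V} {a : V} (ha : a ∈ S)
    (h : ∀ x ∈ S, ∃ p : G.Walk a x, ∀ v ∈ p.support, v ∈ S) :
    (G.induce S).Connected := by
  rw [connected_iff]
  refine ⟨?_, ⟨⟨a, ha⟩⟩⟩
  rintro ⟨x, hx⟩ ⟨y, hy⟩
  obtain ⟨p, hp⟩ := h x hx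
  obtain ⟨q, hq⟩ := h y hy
  exact (k4aux_reach_induce_of_walk p hp ha hx).symm.trans
    (k4aux_reach_induce_of_walk q hq ha hy)

lemma k4aux_walk_support_connected [DecidableEq V] {x y : V} (p : G.Walk x y) :
    (G.induce {v | v ∈ p.support}).Connected := by
  refine k4aux_hub_connected (a := x) p.start_mem_support (fun z hz => ?_)
  exact ⟨p.takeUntil z hz, fun v hv => p.support_takeUntil_subset hz hv⟩

lemma k4aux_exists_walk_of_induce_connected {S : Set V} (h : (G.induce S).Connected) {x y : V}
    (hx : x ∈ S) (hy : y ∈ S) : ∃ p : G.Walk x y, ∀ v ∈ p.support, v ∈ S := by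
  obtain ⟨q⟩ := h.preconnected ⟨x, hx⟩ ⟨y, hy⟩
  refine ⟨q.map (Embedding.induce S).toHom, ?_⟩
  intro v hv
  erw [Walk.support_map, List.mem_map] at hv
  obtain ⟨⟨w, hw⟩, _, rfl⟩ := hv
  exact hw

lemma k4aux_takeUntil_cons_ne [DecidableEq V] {v x t u : V} (r : G.Adj v x) (q : G.Walk x t)
    (h : u ∈ (Walk.cons r q).support) (hvu : v ≠ u) (hq : u ∈ q.support) :
    (Walk.cons r q).takeUntil u h = Walk.cons r (q.takeUntil u hq) := by
  simp only [Walk.takeUntil]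
  rw [dif_neg hvu]

lemma k4aux_mem_takeUntil [DecidableEq V] :
    ∀ {s t : V} (p : G.Walk s t) {x y : V} (hy : y ∈ p.support) (hx : x ∈ p.support),
      x ∉ (p.takeUntil y hy).support → y ∈ (p.takeUntil x hx).support := by
  intro s t p
  induction p with
  | nil =>
    intro x y hy hx h
    rw [Walk.mem_support_nil_iff] at hy hx
    subst hy; subst hx
    exact absurd (Walk.start_mem_support _) h
  | cons r q ih =>
    rename_i v w t'
    intro x y hy hx h
    by_cases hys : y = v
    · subst hys
      exact Walk.start_mem_support _
    by_cases hxs : x = v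
    · exact absurd (show x ∈ _ from by rw [hxs]; exact Walk.start_mem_support _) h
    have hy' : y ∈ q.support := by
      have := hy; rw [Walk.support_cons, List.mem_cons] at this
      exact this.resolve_left hys
    have hx' : x ∈ q.support := by
      have := hx; rw [Walk.support_cons, List.mem_cons] at this
      exact this.resolve_left hxs
    rw [k4aux_takeUntil_cons_ne r q hy (fun e => hys e.symm) hy', Walk.support_cons] at h
    rw [k4aux_takeUntil_cons_ne r q hx (fun e => hxs e.symm) hx', Walk.support_cons]
    exact List.mem_cons_of_mem _ (ih hy' hx' (fun hc => h (List.mem_cons_of_mem _ hc)))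

lemma k4aux_first_hit {SP A : Set V} {z : V} (hdisj : ∀ x ∈ A, x ∉ SP)
    (hstep : ∀ s ∈ A, ∀ s', G.Adj s s' → s' ∉ SP → s' ≠ z → s' ∈ A) :
    ∀ {s d : V} (W : G.Walk s d), s ∈ A → d ∈ SP → (∀ v ∈ W.support, v ≠ z) →
      ∃ q p, q ∈ SP ∧ q ∈ W.support ∧ p ∈ A ∧ G.Adj p q := by
  intro s d W
  induction W with
  | nil =>
    intro hs hd _
    exact absurd hd (hdisj _ hs)
  | cons r W' ih =>
    rename_i a b c
    intro hs hd hz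
    by_cases hb : b ∈ SP
    · exact ⟨b, a, hb, by simp, hs, r⟩
    · have hbA : b ∈ A := hstep a hs b r hb (hz b (by simp))
      obtain ⟨q, p, h1, h2, h3, h4⟩ := ih hbA hd (fun v hv => hz v (by simp [hv]))
      exact ⟨q, p, h1, by simp [h2], h3, h4⟩

lemma k4aux_split [DecidableEq V] {b t x y : V} (Q : G.Walk b t) (hQ : Q.IsPath)
    (hyQ : y ∈ Q.support) (hxin : x ∈ (Q.takeUntil y hyQ).support) (hxy : x ≠ y) :
    ∃ Bs Cs : Set V, (G.induce Bs).Connected ∧ (G.induce Cs).Connected ∧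
      b ∈ Bs ∧ x ∈ Bs ∧ y ∈ Cs ∧ t ∈ Cs ∧ Disjoint Bs Cs ∧
      (∀ v ∈ Bs, v ∈ Q.support) ∧ (∀ v ∈ Cs, v ∈ Q.support) ∧
      (∃ z ∈ Bs, G.Adj y z) := by
  have hyb : y ≠ b := by
    intro e; subst e
    have h0 : Q.takeUntil y hyQ = Walk.nil := Walk.nil_iff_eq_nil.mp (Walk.isPath_iff_nil.mp (hQ.takeUntil hyQ))
    rw [h0, Walk.mem_support_nil_iff] at hxin
    exact hxy hxin
  obtain ⟨z, hyz, r, hrev⟩ := Walk.exists_eq_cons_of_ne hyb (Q.takeUntil y hyQ).reverse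
  have h1 : (Q.takeUntil y hyQ).support.reverse = y :: r.support := by
    rw [← Walk.support_reverse, hrev, Walk.support_cons]
  have hsupp' : ∀ v, v ∈ (Q.takeUntil y hyQ).support ↔ (v ∈ r.support ∨ v = y) := by
    intro v
    rw [← List.mem_reverse, h1]
    simp [or_comm]
  have hynr : y ∉ r.support := by
    have h2 : (y :: r.support).Nodup := by
      rw [← h1]
      exact List.nodup_reverse.mpr (hQ.takeUntil hyQ).support_nodup
    exact (List.nodup_cons.mp h2).1
  have hQsplit : Q.support
      = (Q.takeUntil y hyQ).support ++ (Q.dropUntil y hyQ).support.tail := by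
    conv_lhs => rw [← Q.take_spec hyQ]
    rw [Walk.support_append]
  have hdisj2 : ∀ v ∈ (Q.takeUntil y hyQ).support, v ∉ (Q.dropUntil y hyQ).support.tail := by
    have := hQ.support_nodup
    rw [hQsplit] at this
    exact fun v hv hv' => (List.disjoint_of_nodup_append this) hv hv'
  refine ⟨{v | v ∈ r.support}, {v | v ∈ (Q.dropUntil y hyQ).support},
    k4aux_walk_support_connected r, k4aux_walk_support_connected _,
    r.end_mem_support, ((hsupp' x).mp hxin).resolve_right hxy, Walk.start_mem_support _,
    Walk.end_mem_support _, ?_, ?_, fun v hv => Q.support_dropUntil_subset hyQ hv,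
    ⟨z, r.start_mem_support, hyz⟩⟩
  · rw [Set.disjoint_left]
    intro v hv hv'
    have hvp' : v ∈ (Q.takeUntil y hyQ).support := (hsupp' v).mpr (Or.inl hv)
    have hvy : v ≠ y := fun e => hynr (e ▸ hv)
    have : v ∈ (Q.dropUntil y hyQ).support.tail := by
      have := (Walk.support_eq_cons (Q.dropUntil y hyQ)) ▸ hv'
      rcases List.mem_cons.mp this with h | h
      · exact absurd h hvy
      · exact h
    exact hdisj2 v hvp' this
  · intro v hv
    exact Q.support_takeUntil_subset hyQ ((hsupp' v).mpr (Or.inl hv))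

end AuxK4

/-- In a 3-connected graph, if a vertex `u ∈ U` has at least 3 neighbors in `U`,
then `G` contains a `K_4` minor each of whose branch sets meets `U`. -/
theorem k4_minor_on_U_of_three_neighbors {V : Type*} (G : SimpleGraph V)
    (h3 : ThreeConnected G) (U : Set V) (u : V) (hu : u ∈ U)
    (hdeg : 3 ≤ (G.neighborSet u ∩ U).ncard) :
    ∃ B : Fin 4 → Set V, IsCompleteMinorWitness G 4 B ∧
      ∀ i, (B i ∩ U).Nonempty := by
  classical
  obtain ⟨T, hTsub, hT3⟩ := Set.exists_subset_card_eq hdeg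
  rw [Set.ncard_eq_three] at hT3
  obtain ⟨a, b, c, hab, hac, hbc, rfl⟩ := hT3
  obtain ⟨hua, haU⟩ := hTsub (show a ∈ ({a, b, c} : Set V) by simp)
  obtain ⟨hub, hbU⟩ := hTsub (show b ∈ ({a, b, c} : Set V) by simp)
  obtain ⟨huc, hcU⟩ := hTsub (show c ∈ ({a, b, c} : Set V) by simp)
  have hua' : G.Adj u a := hua
  have hub' : G.Adj u b := hub
  have huc' : G.Adj u c := huc
  have hau : a ≠ u := (G.ne_of_adj hua').symm
  have hbu : b ≠ u := (G.ne_of_adj hub').symm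
  have hcu : c ≠ u := (G.ne_of_adj huc').symm
  -- the path Q from b to c avoiding u and a
  have hS1 : ({u, a} : Set V).ncard ≤ 2 :=
    le_trans (Set.ncard_insert_le _ _) (by simp)
  have hbS1 : b ∈ ({u, a} : Set V)ᶜ := by simp [hbu, hab.symm]
  have hcS1 : c ∈ ({u, a} : Set V)ᶜ := by simp [hcu, hac.symm]
  obtain ⟨P0, hP0⟩ := k4aux_exists_walk_of_induce_connected (h3 _ hS1) hbS1 hcS1
  set Q := P0.bypass with hQdef
  have hQpath : Q.IsPath := P0.bypass_isPath
  have hQsup : ∀ v ∈ Q.support, v ≠ u ∧ v ≠ a := by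
    intro v hv
    have := hP0 v (P0.support_bypass_subset hv)
    simp only [Set.mem_compl_iff, Set.mem_insert_iff, Set.mem_singleton_iff, not_or] at this
    exact this
  set SP : Set V := {v | v ∈ Q.support} with hSPdef
  have huSP : u ∉ SP := fun h => (hQsup u h).1 rfl
  have haSP : a ∉ SP := fun h => (hQsup a h).2 rfl
  have hbSP : b ∈ SP := Q.start_mem_support
  have hcSP : c ∈ SP := Q.end_mem_support
  -- the component A of a in G - (SP ∪ {u})
  set A : Set V := {x | ∃ p : G.Walk a x, ∀ v ∈ p.support, v ∉ SP ∧ v ≠ u} with hAdef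
  have haA : a ∈ A := by
    refine ⟨Walk.nil, fun v hv => ?_⟩
    rw [SimpleGraph.Walk.mem_support_nil_iff] at hv
    subst hv
    exact ⟨haSP, hau⟩
  have hA : ∀ x ∈ A, x ∉ SP ∧ x ≠ u := by
    rintro x ⟨p, hp⟩
    exact hp x p.end_mem_support
  have hAconn : (G.induce A).Connected := by
    refine k4aux_hub_connected haA ?_
    rintro x ⟨p, hp⟩
    exact ⟨p, fun v hv =>
      ⟨p.takeUntil v hv, fun w hw => hp w (p.support_takeUntil_subset hv hw)⟩⟩
  have hstep : ∀ s ∈ A, ∀ s', G.Adj s s' → s' ∉ SP → s' ≠ u → s' ∈ A := by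
    rintro s ⟨p, hp⟩ s' hadj h1 h2
    refine ⟨p.concat hadj, fun v hv => ?_⟩
    rw [SimpleGraph.Walk.support_concat, List.mem_append] at hv
    rcases hv with hv | hv
    · exact hp v hv
    · rw [List.mem_singleton] at hv
      subst hv
      exact ⟨h1, h2⟩
  -- first attachment q₁
  have hone : ({u} : Set V).ncard ≤ 2 := by simp [Set.ncard_singleton]
  have haC1 : a ∈ ({u} : Set V)ᶜ := by simp [hau]
  have hcC1 : c ∈ ({u} : Set V)ᶜ := by simp [hcu]
  obtain ⟨W1, hW1⟩ := k4aux_exists_walk_of_induce_connected (h3 _ hone) haC1 hcC1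
  obtain ⟨q₁, p₁, hq₁SP, hq₁W, hp₁A, hp₁adj⟩ :=
    k4aux_first_hit (fun x hx => (hA x hx).1) hstep W1 haA hcSP
      (fun v hv => by simpa using hW1 v hv)
  -- second attachment w
  have haq₁ : a ≠ q₁ := fun e => haSP (e ▸ hq₁SP)
  have hq₁u : q₁ ≠ u := fun e => huSP (e ▸ hq₁SP)
  set d : V := if q₁ = c then b else c with hddef
  have hdSP : d ∈ SP := by
    by_cases h : q₁ = c
    · rw [hddef, if_pos h]; exact hbSP
    · rw [hddef, if_neg h]; exact hcSP
  have hdq₁ : d ≠ q₁ := by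
    by_cases h : q₁ = c
    · rw [hddef, if_pos h, h]
      exact hbc
    · rw [hddef, if_neg h]
      exact fun e => h e.symm
  have hdu : d ≠ u := fun e => huSP (e ▸ hdSP)
  have hS2 : ({u, q₁} : Set V).ncard ≤ 2 :=
    le_trans (Set.ncard_insert_le _ _) (by simp)
  have haC2 : a ∈ ({u, q₁} : Set V)ᶜ := by simp [hau, haq₁]
  have hdC2 : d ∈ ({u, q₁} : Set V)ᶜ := by simp [hdu, hdq₁]
  obtain ⟨W2, hW2⟩ := k4aux_exists_walk_of_induce_connected (h3 _ hS2) haC2 hdC2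
  have hW2' : ∀ v ∈ W2.support, v ≠ u ∧ v ≠ q₁ := by
    intro v hv
    have := hW2 v hv
    simp only [Set.mem_compl_iff, Set.mem_insert_iff, Set.mem_singleton_iff, not_or] at this
    exact this
  obtain ⟨w, p₂, hwSP, hwW, hp₂A, hp₂adj⟩ :=
    k4aux_first_hit (fun x hx => (hA x hx).1) hstep W2 haA hdSP
      (fun v hv => (hW2' v hv).1)
  have hwq₁ : w ≠ q₁ := (hW2' w hwW).2
  -- order the two attachments along Q
  obtain ⟨x, y, hxyne, hyQ, hxin, px, hpxA, hpxadj, py, hpyA, hpyadj⟩ :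
      ∃ x y, x ≠ y ∧ ∃ hyQ : y ∈ Q.support, x ∈ (Q.takeUntil y hyQ).support ∧
        ∃ px ∈ A, G.Adj px x ∧ ∃ py ∈ A, G.Adj py y := by
    by_cases hcase : w ∈ (Q.takeUntil q₁ hq₁SP).support
    · exact ⟨w, q₁, hwq₁, hq₁SP, hcase, p₂, hp₂A, hp₂adj, p₁, hp₁A, hp₁adj⟩
    · exact ⟨q₁, w, fun e => hwq₁ e.symm, hwSP,
        k4aux_mem_takeUntil Q hq₁SP hwSP hcase, p₁, hp₁A, hp₁adj, p₂, hp₂A, hp₂adj⟩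
  obtain ⟨Bs, Cs, hBsconn, hCsconn, hbBs, hxBs, hyCs, hcCs, hBCdisj, hBsSP, hCsSP, z, hzBs, hyz⟩ :=
    k4aux_split Q hQpath hyQ hxin hxyne
  -- assemble the four branch sets
  have hxSP : x ∈ SP := hBsSP x hxBs
  have hySP : y ∈ SP := hCsSP y hyCs
  have hDuA : Disjoint ({u} : Set V) A := by
    rw [Set.disjoint_singleton_left]
    exact fun h => (hA u h).2 rfl
  have hDuB : Disjoint ({u} : Set V) Bs := by
    rw [Set.disjoint_singleton_left]
    exact fun h => huSP (hBsSP u h)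
  have hDuC : Disjoint ({u} : Set V) Cs := by
    rw [Set.disjoint_singleton_left]
    exact fun h => huSP (hCsSP u h)
  have hDAB : Disjoint A Bs := by
    rw [Set.disjoint_left]
    exact fun v hv hv' => (hA v hv).1 (hBsSP v hv')
  have hDAC : Disjoint A Cs := by
    rw [Set.disjoint_left]
    exact fun v hv hv' => (hA v hv).1 (hCsSP v hv')
  have huconn : (G.induce ({u} : Set V)).Connected := by
    refine k4aux_hub_connected rfl (fun v hv => ?_)
    rw [Set.mem_singleton_iff] at hv
    subst hv
    refine ⟨Walk.nil, fun s hs => ?_⟩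
    rw [SimpleGraph.Walk.mem_support_nil_iff] at hs
    exact hs
  refine ⟨![{u}, A, Bs, Cs], ⟨?_, ?_, ?_, ?_⟩, ?_⟩
  · intro i
    fin_cases i
    · exact ⟨u, rfl⟩
    · exact ⟨a, haA⟩
    · exact ⟨b, hbBs⟩
    · exact ⟨c, hcCs⟩
  · intro i
    fin_cases i
    · exact huconn
    · exact hAconn
    · exact hBsconn
    · exact hCsconn
  · intro i j hij
    fin_cases i <;> fin_cases j <;>
      first
        | exact absurd rfl hij
        | exact hDuA | exact hDuB | exact hDuC
        | exact hDuA.symm | exact hDuB.symm | exact hDuC.symm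
        | exact hDAB | exact hDAC | exact hDAB.symm | exact hDAC.symm
        | exact hBCdisj | exact hBCdisj.symm
  · intro i j hij
    fin_cases i <;> fin_cases j <;>
      first
        | exact absurd rfl hij
        | exact ⟨u, rfl, a, haA, hua'⟩
        | exact ⟨u, rfl, b, hbBs, hub'⟩
        | exact ⟨u, rfl, c, hcCs, huc'⟩
        | exact ⟨a, haA, u, rfl, hua'.symm⟩
        | exact ⟨b, hbBs, u, rfl, hub'.symm⟩
        | exact ⟨c, hcCs, u, rfl, huc'.symm⟩
        | exact ⟨px, hpxA, x, hxBs, hpxadj⟩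
        | exact ⟨x, hxBs, px, hpxA, hpxadj.symm⟩
        | exact ⟨py, hpyA, y, hyCs, hpyadj⟩
        | exact ⟨y, hyCs, py, hpyA, hpyadj.symm⟩
        | exact ⟨z, hzBs, y, hyCs, hyz.symm⟩
        | exact ⟨y, hyCs, z, hzBs, hyz⟩
  · intro i
    fin_cases i
    · exact ⟨u, rfl, hu⟩
    · exact ⟨a, haA, haU⟩
    · exact ⟨b, hbBs, hbU⟩
    · exact ⟨c, hcCs, hcU⟩
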